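/- For all n > 24, 0 < ε < 1/3, δ > 0, and s > 0, if m = ε^{-2} n^{1+δ}, then P{ |∑_{i=1}^n k_i(x)(k_i(x)−1)/(m(m−1)) · 1/‖p‖² − 1| ≤ ε(3 + 6s/n^{δ/2} + 5s²ε/n^{δ}) } ≥ 1 − (10/9) e^{−s²/4}, where x ∈ U^m is drawn from the product measure. -/

import Mathlib

set_option maxHeartbeats 1600000
set_option linter.unusedSectionVars false

/-- Number of keys of the sequence `x` (counted with multiplicity) hashed into slot `i`. -/
def kcount {U : Type*} [Fintype U] {n m : ℕ} (h : U → Fin n) (x : Fin m → U) (i : Fin n) : ℕ :=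
  (Finset.univ.filter (fun j => h (x j) = i)).card

/-- Probability of a set `S` of key sequences, under the product measure induced by
the probability mass function `q` on the key space `U`. -/
noncomputable def Pr {U : Type*} [Fintype U] {m : ℕ} (q : U → ℝ) (S : Set (Fin m → U)) : ℝ :=
  ∑ x : Fin m → U, S.indicator (fun y => ∏ j, q (y j)) x

/-- The empirical collision probability `∑ i, k_i(x)(k_i(x) − 1) / (m(m−1))`
of a sequence `x` of `m` keys. -/
noncomputable def collEst {U : Type*} [Fintype U] {n m : ℕ} (h : U → Fin n)
    (x : Fin m → U) : ℝ :=
  ∑ i : Fin n, (kcount h x i : ℝ) * ((kcount h x i : ℝ) - 1) / ((m : ℝ) * ((m : ℝ) - 1))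



open Finset

namespace CEaux

variable {U : Type*} [Fintype U] {n m : ℕ}

/-- collision indicator -/
def cF (h : U → Fin n) : U → U → ℝ := fun u v => if h u = h v then 1 else 0

lemma cF_nonneg (h : U → Fin n) (u v : U) : 0 ≤ cF h u v := by
  unfold cF; split <;> norm_num

lemma sum_w (q : U → ℝ) :
    ∑ x : Fin m → U, (∏ j, q (x j)) = (∑ u, q u) ^ m := by
  have := Finset.prod_univ_sum (fun _ : Fin m => (Finset.univ : Finset U))
    (fun _ u => q u)
  rw [Fintype.piFinset_univ] at this
  rw [← this, Finset.prod_const, Finset.card_univ, Fintype.card_fin]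

section count

variable (h : U → Fin n) (x : Fin m → U)

lemma sum_G (G : Fin n → ℝ) :
    ∑ j, G (h (x j)) = ∑ i, (kcount h x i : ℝ) * G i := by
  rw [← Finset.sum_fiberwise Finset.univ (fun j => h (x j)) (fun j => G (h (x j)))]
  refine Finset.sum_congr rfl (fun i _ => ?_)
  rw [Finset.sum_congr rfl (fun j hj => ?_), Finset.sum_const]
  · rw [kcount, nsmul_eq_mul]
  · rw [(Finset.mem_filter.mp hj).2]

lemma sum_kcount : ∑ i, (kcount h x i : ℝ) = m := by
  have h1 := sum_G h x (fun _ => (1:ℝ))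
  simp only [mul_one] at h1
  rw [← h1]
  simp

lemma row_sum (j : Fin m) : ∑ j', cF h (x j) (x j') = (kcount h x (h (x j)) : ℝ) := by
  unfold cF kcount
  have hsw : ∀ j' : Fin m, (if h (x j) = h (x j') then (1:ℝ) else 0)
      = (if h (x j') = h (x j) then (1:ℝ) else 0) := fun j' => by simp [eq_comm]
  rw [Finset.sum_congr rfl (fun j' _ => hsw j')]
  exact_mod_cast Finset.sum_boole _ _

lemma offDiag_sum :
    ∑ p ∈ Finset.univ.offDiag, cF h (x p.1) (x p.2)
      = ∑ i, (kcount h x i : ℝ) * ((kcount h x i : ℝ) - 1) := by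
  have hall : ∑ p ∈ (Finset.univ ×ˢ Finset.univ : Finset (Fin m × Fin m)), cF h (x p.1) (x p.2)
      = ∑ i, (kcount h x i : ℝ) * (kcount h x i : ℝ) := by
    rw [Finset.sum_product]
    calc ∑ j, ∑ j', cF h (x j) (x j') = ∑ j, (kcount h x (h (x j)) : ℝ) := by
          exact Finset.sum_congr rfl (fun j _ => row_sum h x j)
      _ = _ := sum_G h x (fun i => (kcount h x i : ℝ))
  have hdiag : ∑ p ∈ (Finset.univ : Finset (Fin m)).diag, cF h (x p.1) (x p.2) = m := by
    rw [Finset.sum_diag]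
    simp [cF]
  have hsplit : ∑ p ∈ (Finset.univ ×ˢ Finset.univ : Finset (Fin m × Fin m)), cF h (x p.1) (x p.2)
      = (∑ p ∈ (Finset.univ : Finset (Fin m)).diag, cF h (x p.1) (x p.2))
        + ∑ p ∈ Finset.univ.offDiag, cF h (x p.1) (x p.2) := by
    rw [← Finset.diag_union_offDiag, Finset.sum_union (Finset.disjoint_diag_offDiag _)]
  have hk : ∑ i, (kcount h x i : ℝ) * ((kcount h x i : ℝ) - 1)
      = (∑ i, (kcount h x i : ℝ) * (kcount h x i : ℝ)) - m := by
    rw [← sum_kcount h x, ← Finset.sum_sub_distrib]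
    exact Finset.sum_congr rfl (fun i _ => by ring)
  rw [hk, ← hall, hsplit, hdiag]
  ring

lemma collEst_eq :
    collEst h x = (∑ p ∈ Finset.univ.offDiag, cF h (x p.1) (x p.2)) / ((m:ℝ) * ((m:ℝ)-1)) := by
  rw [collEst, offDiag_sum, Finset.sum_div]

lemma collEst_nonneg (hm : 2 ≤ m) : 0 ≤ collEst h x := by
  rw [collEst_eq]
  apply div_nonneg
  · exact Finset.sum_nonneg (fun p _ => cF_nonneg h _ _)
  · have : (2:ℝ) ≤ m := by exact_mod_cast hm
    nlinarith

end count

end CEaux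
open Finset
namespace CEaux2

variable {α : Type*} [DecidableEq α] [Fintype α]

lemma exists_perm_two (a b a' b' : α) (hab : a ≠ b) (hab' : a' ≠ b') :
    ∃ τ : Equiv.Perm α, τ a' = a ∧ τ b' = b := by
  classical
  set τ₁ := Equiv.swap a' a with hτ₁
  have h1 : τ₁ a' = a := Equiv.swap_apply_left _ _
  set b'' := τ₁ b' with hb''
  have hba : b'' ≠ a := by
    intro hcon
    have h2 : τ₁ b' = τ₁ a' := by rw [← hb'', hcon, h1]
    exact hab' (τ₁.injective h2).symm
  refine ⟨τ₁.trans (Equiv.swap b'' b), ?_, ?_⟩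
  · simp only [Equiv.trans_apply, h1]
    exact Equiv.swap_apply_of_ne_of_ne (fun hc => hba hc.symm) hab
  · simp only [Equiv.trans_apply, ← hb'']
    exact Equiv.swap_apply_left _ _

lemma perm_sum_pair (F : α → α → ℝ) {a b a' b' : α} (hab : a ≠ b) (hab' : a' ≠ b') :
    ∑ σ : Equiv.Perm α, F (σ a) (σ b) = ∑ σ : Equiv.Perm α, F (σ a') (σ b') := by
  obtain ⟨τ, hta, htb⟩ := exists_perm_two a b a' b' hab hab'
  exact Fintype.sum_bijective (fun σ => σ * τ) (Group.mulRight_bijective τ)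
    (fun σ => F (σ a) (σ b)) (fun σ => F (σ a') (σ b')) (fun σ => by
      simp only [Equiv.Perm.mul_apply, hta, htb])

lemma perm_sum_offDiag (σ : Equiv.Perm α) (F : α → α → ℝ) :
    ∑ p ∈ Finset.univ.offDiag, F (σ p.1) (σ p.2) = ∑ p ∈ Finset.univ.offDiag, F p.1 p.2 := by
  refine Finset.sum_equiv (Equiv.prodCongr σ σ) (fun p => ?_) (fun p _ => rfl)
  simp only [Finset.mem_offDiag, Finset.mem_univ, true_and, Equiv.prodCongr_apply,
    Prod.map_fst, Prod.map_snd, ne_eq, EmbeddingLike.apply_eq_iff_eq]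

lemma perm_sum_key (F : α → α → ℝ) {a b : α} (hab : a ≠ b) :
    ((Finset.univ : Finset α).offDiag.card : ℝ) * ∑ σ : Equiv.Perm α, F (σ a) (σ b)
      = (Fintype.card (Equiv.Perm α) : ℝ) * ∑ p ∈ Finset.univ.offDiag, F p.1 p.2 := by
  have step1 : ((Finset.univ : Finset α).offDiag.card : ℝ) * ∑ σ : Equiv.Perm α, F (σ a) (σ b)
      = ∑ p ∈ (Finset.univ : Finset α).offDiag, ∑ σ : Equiv.Perm α, F (σ p.1) (σ p.2) := by
    rw [Finset.sum_congr rfl (fun p hp => perm_sum_pair F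
      (Finset.mem_offDiag.mp hp).2.2 hab)]
    rw [Finset.sum_const, nsmul_eq_mul]
  rw [step1, Finset.sum_comm]
  rw [Finset.sum_congr rfl (fun σ _ => perm_sum_offDiag σ F)]
  rw [Finset.sum_const, nsmul_eq_mul, Finset.card_univ]

end CEaux2
open Finset
namespace CEaux3

variable {U : Type*} [Fintype U] {m : ℕ}

lemma sum_w (q : U → ℝ) :
    ∑ x : Fin m → U, (∏ j, q (x j)) = (∑ u, q u) ^ m := by
  have := Finset.prod_univ_sum (fun _ : Fin m => (Finset.univ : Finset U))
    (fun _ u => q u)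
  rw [Fintype.piFinset_univ] at this
  rw [← this, Finset.prod_const, Finset.card_univ, Fintype.card_fin]

def pA (m : ℕ) (r : Fin (m/2)) : Fin m := ⟨2*r.1, by have := r.2; omega⟩
def pB (m : ℕ) (r : Fin (m/2)) : Fin m := ⟨2*r.1+1, by have := r.2; omega⟩
def pC (m : ℕ) (t : Fin (m - 2*(m/2))) : Fin m := ⟨2*(m/2)+t.1, by have := t.2; omega⟩

def e2f (m : ℕ) : ((Fin (m/2) × Fin 2) ⊕ Fin (m - 2*(m/2))) → Fin m :=
  Sum.elim (fun rb => ⟨2*rb.1.1 + rb.2.1, by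
    have h1 := rb.1.2; have h2 := rb.2.2; omega⟩) (pC m)

def e2inv (m : ℕ) : Fin m → ((Fin (m/2) × Fin 2) ⊕ Fin (m - 2*(m/2))) := fun j =>
  if hj : (j:ℕ) < 2*(m/2)
    then Sum.inl (⟨j.1/2, by omega⟩, ⟨j.1%2, by omega⟩)
    else Sum.inr ⟨j.1 - 2*(m/2), by have := j.2; omega⟩

def e2 (m : ℕ) : ((Fin (m/2) × Fin 2) ⊕ Fin (m - 2*(m/2))) ≃ Fin m where
  toFun := e2f m
  invFun := e2inv m
  left_inv := by
    rintro (⟨r, b⟩ | t)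
    · have hr := r.2; have hb := b.2
      simp only [e2inv]
      rw [dif_pos (by simp only [e2f, Sum.elim_inl]; omega)]
      simp only [e2f, Sum.elim_inl]
      simp only [Sum.inl.injEq, Prod.mk.injEq]
      constructor <;> (apply Fin.ext; dsimp only []; omega)
    · have ht := t.2
      simp only [e2inv]
      rw [dif_neg (by simp only [e2f, Sum.elim_inr, pC]; omega)]
      simp only [e2f, Sum.elim_inr, pC]
      simp only [Sum.inr.injEq]
      apply Fin.ext; dsimp only []; omega
  right_inv := by
    intro j
    simp only [e2f, e2inv]
    by_cases hj : (j:ℕ) < 2*(m/2)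
    · rw [dif_pos hj]
      simp only [Sum.elim_inl]
      apply Fin.ext; dsimp only []; omega
    · rw [dif_neg hj]
      simp only [Sum.elim_inr, pC]
      apply Fin.ext; dsimp only []
      have := j.2; omega

def Phi (m : ℕ) (U : Type*) (z : (Fin (m/2) → U × U) × (Fin (m - 2*(m/2)) → U)) :
    Fin m → U := fun j =>
  Sum.elim (fun rb : Fin (m/2) × Fin 2 => if rb.2 = (0 : Fin 2) then (z.1 rb.1).1 else (z.1 rb.1).2)
    (fun t => z.2 t) ((e2 m).symm j)

lemma e2_inl0 (r : Fin (m/2)) : e2 m (Sum.inl (r, 0)) = pA m r := rfl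
lemma e2_inl1 (r : Fin (m/2)) : e2 m (Sum.inl (r, 1)) = pB m r := rfl
lemma e2_inr (t : Fin (m - 2*(m/2))) : e2 m (Sum.inr t) = pC m t := rfl

lemma Phi_apply_e2 (z) (w) : Phi m U z (e2 m w)
    = Sum.elim (fun rb : Fin (m/2) × Fin 2 =>
        if rb.2 = (0 : Fin 2) then (z.1 rb.1).1 else (z.1 rb.1).2) (fun t => z.2 t) w := by
  unfold Phi; rw [Equiv.symm_apply_apply]

lemma Phi_pA (z) (r : Fin (m/2)) : Phi m U z (pA m r) = (z.1 r).1 := by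
  rw [← e2_inl0, Phi_apply_e2]; rfl

lemma Phi_pB (z) (r : Fin (m/2)) : Phi m U z (pB m r) = (z.1 r).2 := by
  rw [← e2_inl1, Phi_apply_e2]; rfl

lemma Phi_pC (z) (t : Fin (m - 2*(m/2))) : Phi m U z (pC m t) = z.2 t := by
  rw [← e2_inr, Phi_apply_e2]; rfl

lemma Phi_bijective : Function.Bijective (Phi m U) := by
  apply Function.bijective_iff_has_inverse.mpr
  refine ⟨fun x => (fun r => (x (pA m r), x (pB m r)), fun t => x (pC m t)), ?_, ?_⟩
  · intro z
    refine Prod.ext (funext fun r => ?_) (funext fun t => ?_)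
    · simp only [Phi_pA, Phi_pB]
    · simp only [Phi_pC]
  · intro x
    funext j
    conv_rhs => rw [← (e2 m).apply_symm_apply j]
    unfold Phi
    rcases hw : (e2 m).symm j with ⟨r, b⟩ | t
    · by_cases hb0 : b = 0
      · subst hb0
        simp only [Sum.elim_inl, if_pos rfl, ite_true, e2_inl0]
      · have hb1 : b = 1 := by
          apply Fin.ext
          have h2 := b.2
          have h0 : b.1 ≠ 0 := fun hc => hb0 (Fin.ext hc)
          omega
        subst hb1
        simp only [Sum.elim_inl]
        rw [if_neg (by decide), e2_inl1]
    · simp only [Sum.elim_inr, e2_inr]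

lemma weight_split (q : U → ℝ) (z : (Fin (m/2) → U × U) × (Fin (m - 2*(m/2)) → U)) :
    (∏ j, q (Phi m U z j))
      = (∏ r, q (z.1 r).1 * q (z.1 r).2) * ∏ t, q (z.2 t) := by
  have h1 := Fintype.prod_bijective (e2 m) (e2 m).bijective
    (fun w => q (Phi m U z (e2 m w))) (fun j => q (Phi m U z j)) (fun w => rfl)
  rw [← h1, Fintype.prod_sum_type, Fintype.prod_prod_type]
  congr 1
  · refine Finset.prod_congr rfl (fun r _ => ?_)
    rw [Fin.prod_univ_two]
    rw [show ((r, (0:Fin 2)) : Fin (m/2) × Fin 2) = (r, 0) from rfl]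
    rw [e2_inl0, e2_inl1, Phi_pA, Phi_pB]
  · exact Finset.prod_congr rfl (fun t _ => by rw [e2_inr, Phi_pC])

lemma factorization (q : U → ℝ) (ψ : U → U → ℝ) :
    ∑ x : Fin m → U, (∏ j, q (x j)) * ∏ r : Fin (m/2), ψ (x (pA m r)) (x (pB m r))
      = (∑ u, ∑ v, q u * q v * ψ u v) ^ (m/2) * (∑ u, q u) ^ (m - 2*(m/2)) := by
  have htrans := Fintype.sum_bijective (Phi m U) Phi_bijective
    (fun z => (∏ r, q (z.1 r).1 * q (z.1 r).2 * ψ (z.1 r).1 (z.1 r).2) * ∏ t, q (z.2 t))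
    (fun x => (∏ j, q (x j)) * ∏ r : Fin (m/2), ψ (x (pA m r)) (x (pB m r)))
    (fun z => by
      rw [weight_split q z]
      simp only [Phi_pA, Phi_pB]
      rw [Finset.prod_mul_distrib]
      ring)
  rw [← htrans]
  rw [Fintype.sum_prod_type]
  have hsplit : ∀ z1 : Fin (m/2) → U × U,
      ∑ z2 : Fin (m - 2*(m/2)) → U,
        (∏ r, q (z1 r).1 * q (z1 r).2 * ψ (z1 r).1 (z1 r).2) * ∏ t, q (z2 t)
      = (∏ r, q (z1 r).1 * q (z1 r).2 * ψ (z1 r).1 (z1 r).2) * (∑ u, q u) ^ (m - 2*(m/2)) := by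
    intro z1
    rw [← Finset.mul_sum]
    congr 1
    exact sum_w q
  rw [Finset.sum_congr rfl (fun z1 _ => hsplit z1), ← Finset.sum_mul]
  congr 1
  have h2 := Finset.prod_univ_sum (fun _ : Fin (m/2) => (Finset.univ : Finset (U × U)))
    (fun _ uv => q uv.1 * q uv.2 * ψ uv.1 uv.2)
  rw [Fintype.piFinset_univ] at h2
  rw [← h2, Finset.prod_const, Finset.card_univ, Fintype.card_fin]
  congr 1
  rw [Fintype.sum_prod_type]

end CEaux3

namespace CEaux4
open CEaux CEaux2 CEaux3

variable {U : Type*} [Fintype U] {n m : ℕ}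

/-- the matched-pairs statistic -/
def V (h : U → Fin n) (σ : Equiv.Perm (Fin m)) (x : Fin m → U) : ℝ :=
  ∑ r : Fin (m/2), cF h (x (σ (pA m r))) (x (σ (pB m r)))

lemma sum_V (h : U → Fin n) (x : Fin m → U) (hm : 2 ≤ m) :
    ∑ σ : Equiv.Perm (Fin m), V h σ x
      = ((m/2 : ℕ) : ℝ) * (m.factorial : ℝ) * collEst h x := by
  unfold V
  rw [Finset.sum_comm]
  have hmr : (2:ℝ) ≤ (m:ℝ) := by exact_mod_cast hm
  have hkey : ∀ r : Fin (m/2),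
      ∑ σ : Equiv.Perm (Fin m), cF h (x (σ (pA m r))) (x (σ (pB m r)))
        = (m.factorial : ℝ) * collEst h x := by
    intro r
    have hne : pA m r ≠ pB m r := by
      intro hc
      have := congrArg Fin.val hc
      simp [pA, pB] at this
    have hkey2 := CEaux2.perm_sum_key (fun j j' => cF h (x j) (x j')) hne
    have hD : (((Finset.univ : Finset (Fin m)).offDiag.card : ℝ)) = (m:ℝ)*(m:ℝ) - m := by
      rw [Finset.offDiag_card, Finset.card_univ, Fintype.card_fin]
      have hle : m ≤ m * m := Nat.le_mul_of_pos_left m (by omega)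
      push_cast [Nat.cast_sub hle]
      ring
    rw [hD, Fintype.card_perm, Fintype.card_fin] at hkey2
    rw [CEaux.collEst_eq]
    have hne2 : (m:ℝ)*((m:ℝ)-1) ≠ 0 := by nlinarith
    rw [mul_div_assoc', eq_div_iff hne2]
    linear_combination hkey2
  rw [Finset.sum_congr rfl (fun r _ => hkey r), Finset.sum_const, Finset.card_univ,
    Fintype.card_fin, nsmul_eq_mul]
  ring

lemma exp_le_avg (h : U → Fin n) (x : Fin m → U) (hm : 2 ≤ m) (θ : ℝ) :
    Real.exp (θ * collEst h x)
      ≤ ∑ σ : Equiv.Perm (Fin m),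
          (1/(m.factorial:ℝ)) * Real.exp ((θ/((m/2 : ℕ):ℝ)) * V h σ x) := by
  have hN : (0:ℝ) < ((m/2 : ℕ):ℝ) := by
    have : 1 ≤ m/2 := by omega
    exact_mod_cast Nat.lt_of_lt_of_le Nat.zero_lt_one this
  have hfac : (0:ℝ) < (m.factorial : ℝ) := by
    exact_mod_cast m.factorial_pos
  have hjensen := convexOn_exp.map_sum_le (t := (Finset.univ : Finset (Equiv.Perm (Fin m))))
    (w := fun _ => 1/(m.factorial:ℝ)) (p := fun σ => (θ/((m/2:ℕ):ℝ)) * V h σ x)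
    (fun _ _ => by positivity)
    (by rw [Finset.sum_const, Finset.card_univ, Fintype.card_perm, Fintype.card_fin,
          nsmul_eq_mul]; field_simp)
    (fun _ _ => Set.mem_univ _)
  simp only [smul_eq_mul] at hjensen
  have harg : ∑ σ : Equiv.Perm (Fin m), (1/(m.factorial:ℝ)) * ((θ/((m/2:ℕ):ℝ)) * V h σ x)
      = θ * collEst h x := by
    rw [← Finset.mul_sum, ← Finset.mul_sum, sum_V h x hm]
    field_simp
  rw [harg] at hjensen
  exact hjensen

lemma perm_integral (q : U → ℝ) (h : U → Fin n) (σ : Equiv.Perm (Fin m)) (a : ℝ) :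
    ∑ x : Fin m → U, (∏ j, q (x j)) * Real.exp (a * V h σ x)
      = ∑ x : Fin m → U, (∏ j, q (x j)) * Real.exp (a * V h 1 x) := by
  refine Fintype.sum_bijective (fun x => x ∘ σ)
    ((Equiv.arrowCongr σ.symm (Equiv.refl U)).bijective) _ _ (fun x => ?_)
  have hw : (∏ j, q ((x ∘ σ) j)) = ∏ j, q (x j) := Equiv.prod_comp σ (fun j => q (x j))
  have hV : V h 1 (x ∘ σ) = V h σ x := by
    unfold V
    simp [Equiv.Perm.one_apply, Function.comp]
  rw [hw, hV]

lemma mgf_bound (q : U → ℝ) (hq0 : ∀ u, 0 ≤ q u) (hq1 : ∑ u, q u = 1)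
    (h : U → Fin n) (hm : 2 ≤ m) (θ : ℝ) :
    ∑ x : Fin m → U, (∏ j, q (x j)) * Real.exp (θ * collEst h x)
      ≤ (∑ u, ∑ v, q u * q v * Real.exp ((θ/((m/2:ℕ):ℝ)) * cF h u v)) ^ (m/2) := by
  have hwnn : ∀ x : Fin m → U, 0 ≤ ∏ j, q (x j) :=
    fun x => Finset.prod_nonneg (fun j _ => hq0 _)
  have step1 : ∑ x : Fin m → U, (∏ j, q (x j)) * Real.exp (θ * collEst h x)
      ≤ ∑ x : Fin m → U, (∏ j, q (x j)) *
          (∑ σ : Equiv.Perm (Fin m), (1/(m.factorial:ℝ)) *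
            Real.exp ((θ/((m/2:ℕ):ℝ)) * V h σ x)) :=
    Finset.sum_le_sum (fun x _ =>
      mul_le_mul_of_nonneg_left (exp_le_avg h x hm θ) (hwnn x))
  refine le_trans step1 ?_
  have swap : ∑ x : Fin m → U, (∏ j, q (x j)) *
      (∑ σ : Equiv.Perm (Fin m), (1/(m.factorial:ℝ)) * Real.exp ((θ/((m/2:ℕ):ℝ)) * V h σ x))
      = (1/(m.factorial:ℝ)) * ∑ σ : Equiv.Perm (Fin m),
          ∑ x : Fin m → U, (∏ j, q (x j)) * Real.exp ((θ/((m/2:ℕ):ℝ)) * V h σ x) := by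
    have e1 : ∀ x : Fin m → U, (∏ j, q (x j)) *
        (∑ σ : Equiv.Perm (Fin m), (1/(m.factorial:ℝ)) * Real.exp ((θ/((m/2:ℕ):ℝ)) * V h σ x))
        = ∑ σ : Equiv.Perm (Fin m), (1/(m.factorial:ℝ)) *
            ((∏ j, q (x j)) * Real.exp ((θ/((m/2:ℕ):ℝ)) * V h σ x)) := by
      intro x
      rw [Finset.mul_sum]
      exact Finset.sum_congr rfl (fun σ _ => by ring)
    rw [Finset.sum_congr rfl (fun x _ => e1 x), Finset.sum_comm, Finset.mul_sum]
    exact Finset.sum_congr rfl (fun σ _ => (Finset.mul_sum _ _ _).symm)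
  rw [swap]
  have inner : ∀ σ : Equiv.Perm (Fin m),
      ∑ x : Fin m → U, (∏ j, q (x j)) * Real.exp ((θ/((m/2:ℕ):ℝ)) * V h σ x)
        = (∑ u, ∑ v, q u * q v * Real.exp ((θ/((m/2:ℕ):ℝ)) * cF h u v)) ^ (m/2) := by
    intro σ
    rw [perm_integral q h σ]
    have hexp : ∀ x : Fin m → U, Real.exp ((θ/((m/2:ℕ):ℝ)) * V h 1 x)
        = ∏ r : Fin (m/2), Real.exp ((θ/((m/2:ℕ):ℝ)) * cF h (x (pA m r)) (x (pB m r))) := by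
      intro x
      unfold V
      simp only [Equiv.Perm.one_apply]
      rw [Finset.mul_sum, Real.exp_sum]
    rw [Finset.sum_congr rfl (fun x _ => by rw [hexp x])]
    have := CEaux3.factorization (m := m) q
      (fun u v => Real.exp ((θ/((m/2:ℕ):ℝ)) * cF h u v))
    rw [this, hq1, one_pow, mul_one]
  rw [Finset.sum_congr rfl (fun σ _ => inner σ), Finset.sum_const, Finset.card_univ,
    Fintype.card_perm, Fintype.card_fin, nsmul_eq_mul]
  have hfac : (0:ℝ) < (m.factorial : ℝ) := by exact_mod_cast m.factorial_pos
  rw [← mul_assoc, one_div, inv_mul_cancel₀ (ne_of_gt hfac), one_mul]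

end CEaux4
open Finset
namespace CEaux5

lemma exp_quad {t : ℝ} (ht : |t| ≤ 1) : Real.exp t ≤ 1 + t + (3/4)*t^2 := by
  have hb := Real.exp_bound ht (n := 2) (by norm_num)
  have hps : ∑ i ∈ Finset.range 2, t ^ i / (i.factorial : ℝ) = 1 + t := by
    simp [Finset.sum_range_succ]
  rw [hps] at hb
  have h2 : |t| ^ 2 * ((2:ℕ).succ / ((2:ℕ).factorial * (2:ℕ) : ℝ)) = (3/4) * t^2 := by
    rw [sq_abs]
    norm_num [Nat.factorial]
    ring
  rw [h2] at hb
  have := abs_le.mp hb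
  linarith [this.2]

lemma one_add_le_exp_pow {c y : ℝ} (hc0 : 0 ≤ c) (hc1 : c ≤ 1) (N : ℕ) :
    (1 + c * (Real.exp y - 1)) ^ N ≤ Real.exp ((N : ℝ) * (c * (Real.exp y - 1))) := by
  have hbase : 0 ≤ 1 + c * (Real.exp y - 1) := by
    rcases le_or_gt 1 (Real.exp y) with hy | hy
    · nlinarith
    · nlinarith [Real.exp_pos y]
  calc (1 + c * (Real.exp y - 1)) ^ N
      ≤ (Real.exp (c * (Real.exp y - 1))) ^ N := by
        apply pow_le_pow_left₀ hbase
        linarith [Real.add_one_le_exp (c * (Real.exp y - 1))]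
    _ = Real.exp ((N:ℝ) * (c * (Real.exp y - 1))) := by
        rw [← Real.exp_nat_mul]

/-- upper-tail numeric choice -/
lemma numeric_up {K g s η : ℝ} (hg0 : 0 < g) (hg : g ≤ 1/3) (hs : 0 < s)
    (hK : 225/452 ≤ K * g^2) (hKpos : 0 < K)
    (hη : 3*g + 6*s*g + 5*s^2*g^2 ≤ η) :
    ∃ t : ℝ, 0 ≤ t ∧ t ≤ 1 ∧ 1 + s^2/4 + K*(Real.exp t - 1) ≤ K * (t * (1+η)) := by
  have hη0 : 0 < η := by nlinarith
  rcases le_or_gt η (3/2) with hcase | hcase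
  · refine ⟨(2/3)*η, by positivity, by linarith, ?_⟩
    have hexp : Real.exp ((2/3)*η) ≤ 1 + (2/3)*η + (3/4)*((2/3)*η)^2 :=
      exp_quad (by rw [abs_of_nonneg (by positivity)]; linarith)
    have hmain : 1 + s^2/4 ≤ K * (η^2/3) := by
      have h1 : (3*g + 6*s*g) ≤ η := by nlinarith
      have h2 : (3 + 6*s)^2 * (K*g^2) ≤ K * η^2 := by
        have : (3*g+6*s*g)^2 ≤ η^2 := by
          nlinarith [mul_self_le_mul_self (show (0:ℝ) ≤ 3*g+6*s*g by positivity) h1]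
        calc (3 + 6*s)^2 * (K*g^2) = K * (3*g+6*s*g)^2 := by ring
          _ ≤ K * η^2 := by nlinarith
      nlinarith
    nlinarith
  · refine ⟨1, by norm_num, le_refl 1, ?_⟩
    have he : Real.exp 1 ≤ 2.7182818286 := le_of_lt Real.exp_one_lt_d9
    have hKg : 3 * (225/452) ≤ K * g := by
      have : K * g * g ≤ K * g * (1/3) := by
        apply mul_le_mul_of_nonneg_left hg (by positivity)
      have h3 : K*g^2 ≤ K*g*(1/3) := by nlinarith
      nlinarith
    have hKη : K * η ≥ 3*(3*(225/452)) + 5*(225/452)*s^2 := by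
      have : K * (3*g + 5*s^2*g^2) ≤ K * η := by
        apply mul_le_mul_of_nonneg_left _ (le_of_lt hKpos)
        nlinarith
      nlinarith
    nlinarith

/-- lower-tail numeric -/
lemma numeric_low {K g s η : ℝ} (hg0 : 0 < g) (hg : g ≤ 1/3) (hs : 0 < s)
    (hK : 225/452 ≤ K * g^2) (hKpos : 0 < K)
    (hη : 3*g + 6*s*g + 5*s^2*g^2 ≤ η) (hη1 : η ≤ 1) :
    1 + s^2/4 ≤ K * (η^2/4) := by
  have h1 : (3*g + 6*s*g) ≤ η := by nlinarith
  have h2 : (3 + 6*s)^2 * (K*g^2) ≤ K * η^2 := by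
    have : (3*g+6*s*g)^2 ≤ η^2 := by
      nlinarith [mul_self_le_mul_self (show (0:ℝ) ≤ 3*g+6*s*g by positivity) h1]
    calc (3 + 6*s)^2 * (K*g^2) = K * (3*g+6*s*g)^2 := by ring
      _ ≤ K * η^2 := by nlinarith
  nlinarith

end CEaux5

namespace CEaux6

variable {U : Type*} [Fintype U] {n m : ℕ}

lemma cF_def (h : U → Fin n) (u v : U) :
    CEaux.cF h u v = if h u = h v then (1:ℝ) else 0 := rfl

lemma sum_qq_cF (q : U → ℝ) (h : U → Fin n) (p : Fin n → ℝ)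
    (hp : ∀ i, p i = ∑ u ∈ Finset.univ.filter (fun u => h u = i), q u) :
    ∑ u, ∑ v, q u * q v * CEaux.cF h u v = ∑ i, p i ^ 2 := by
  have hrow : ∀ u, ∑ v, q u * q v * CEaux.cF h u v = q u * p (h u) := by
    intro u
    have : ∀ v, q u * q v * CEaux.cF h u v = q u * (if h v = h u then q v else 0) := by
      intro v
      rw [cF_def]
      by_cases hv : h u = h v
      · rw [if_pos hv, if_pos hv.symm]; ring
      · rw [if_neg hv, if_neg (fun hc => hv hc.symm)]; ring
    rw [Finset.sum_congr rfl (fun v _ => this v), ← Finset.mul_sum]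
    congr 1
    rw [← Finset.sum_filter, hp (h u)]
  rw [Finset.sum_congr rfl (fun u _ => hrow u)]
  rw [← Finset.sum_fiberwise Finset.univ (fun u => h u) (fun u => q u * p (h u))]
  refine Finset.sum_congr rfl (fun i _ => ?_)
  have hpi : ∑ u ∈ Finset.univ.filter (fun u => h u = i), q u * p (h u)
      = ∑ u ∈ Finset.univ.filter (fun u => h u = i), q u * p i :=
    Finset.sum_congr rfl (fun u hu => by rw [(Finset.mem_filter.mp hu).2])
  rw [hpi, ← Finset.sum_mul, ← hp i, sq]


lemma mgf_eval (q : U → ℝ) (hq1 : ∑ u, q u = 1) (h : U → Fin n) (p : Fin n → ℝ)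
    (hp : ∀ i, p i = ∑ u ∈ Finset.univ.filter (fun u => h u = i), q u) (a : ℝ) :
    ∑ u, ∑ v, q u * q v * Real.exp (a * CEaux.cF h u v)
      = 1 + (∑ i, p i ^ 2) * (Real.exp a - 1) := by
  have hpt : ∀ u v, q u * q v * Real.exp (a * CEaux.cF h u v)
      = q u * q v + (q u * q v * CEaux.cF h u v) * (Real.exp a - 1) := by
    intro u v
    rw [cF_def]
    by_cases hv : h u = h v
    · rw [if_pos hv, mul_one]; ring
    · rw [if_neg hv, mul_zero, Real.exp_zero]; ring
  have hsum : ∑ u, ∑ v, (q u * q v + (q u * q v * CEaux.cF h u v) * (Real.exp a - 1))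
      = (∑ u, ∑ v, q u * q v) + (∑ u, ∑ v, q u * q v * CEaux.cF h u v) * (Real.exp a - 1) := by
    rw [Finset.sum_mul]
    rw [← Finset.sum_add_distrib]
    refine Finset.sum_congr rfl (fun u _ => ?_)
    rw [Finset.sum_mul, ← Finset.sum_add_distrib]
  calc ∑ u, ∑ v, q u * q v * Real.exp (a * CEaux.cF h u v)
      = ∑ u, ∑ v, (q u * q v + (q u * q v * CEaux.cF h u v) * (Real.exp a - 1)) := by
        exact Finset.sum_congr rfl (fun u _ => Finset.sum_congr rfl (fun v _ => hpt u v))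
    _ = (∑ u, ∑ v, q u * q v) + (∑ u, ∑ v, q u * q v * CEaux.cF h u v) * (Real.exp a - 1) := hsum
    _ = 1 + (∑ i, p i ^ 2) * (Real.exp a - 1) := by
        rw [sum_qq_cF q h p hp, ← Finset.sum_mul_sum, hq1, one_mul]

lemma tail_up (q : U → ℝ) (hq0 : ∀ u, 0 ≤ q u) (hq1 : ∑ u, q u = 1)
    (h : U → Fin n) (p : Fin n → ℝ)
    (hp : ∀ i, p i = ∑ u ∈ Finset.univ.filter (fun u => h u = i), q u)
    (hC0 : 0 ≤ ∑ i, p i ^ 2) (hC1 : (∑ i, p i ^ 2) ≤ 1)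
    (hm : 2 ≤ m) (y θ : ℝ) (hθ : 0 ≤ θ) :
    ∑ x : Fin m → U, (if y < collEst h x then (∏ j, q (x j)) else 0)
      ≤ Real.exp (((m/2:ℕ):ℝ) * ((∑ i, p i ^ 2) * (Real.exp (θ/((m/2:ℕ):ℝ)) - 1)) - θ * y) := by
  have hwnn : ∀ x : Fin m → U, 0 ≤ ∏ j, q (x j) :=
    fun x => Finset.prod_nonneg (fun j _ => hq0 _)
  have step1 : ∑ x : Fin m → U, (if y < collEst h x then (∏ j, q (x j)) else 0)
      ≤ ∑ x : Fin m → U, (∏ j, q (x j)) * Real.exp (θ * collEst h x - θ * y) := by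
    refine Finset.sum_le_sum (fun x _ => ?_)
    by_cases hx : y < collEst h x
    · rw [if_pos hx]
      refine le_mul_of_one_le_right (hwnn x) (Real.one_le_exp ?_)
      nlinarith
    · rw [if_neg hx]
      exact mul_nonneg (hwnn x) (le_of_lt (Real.exp_pos _))
  refine le_trans step1 ?_
  have step2 : ∑ x : Fin m → U, (∏ j, q (x j)) * Real.exp (θ * collEst h x - θ * y)
      = (∑ x : Fin m → U, (∏ j, q (x j)) * Real.exp (θ * collEst h x)) * Real.exp (-(θ*y)) := by
    rw [Finset.sum_mul]
    refine Finset.sum_congr rfl (fun x _ => ?_)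
    rw [mul_assoc, ← Real.exp_add]
    ring_nf
  rw [step2]
  have hmgf := CEaux4.mgf_bound q hq0 hq1 h hm θ
  rw [mgf_eval q hq1 h p hp] at hmgf
  have hpow := CEaux5.one_add_le_exp_pow hC0 hC1 (m/2) (y := θ/((m/2:ℕ):ℝ))
  have hchain := le_trans hmgf hpow
  calc (∑ x : Fin m → U, (∏ j, q (x j)) * Real.exp (θ * collEst h x)) * Real.exp (-(θ*y))
      ≤ Real.exp (((m/2:ℕ):ℝ) * ((∑ i, p i ^ 2) * (Real.exp (θ/((m/2:ℕ):ℝ)) - 1)))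
          * Real.exp (-(θ*y)) := by
        apply mul_le_mul_of_nonneg_right hchain (le_of_lt (Real.exp_pos _))
    _ = Real.exp (((m/2:ℕ):ℝ) * ((∑ i, p i ^ 2) * (Real.exp (θ/((m/2:ℕ):ℝ)) - 1)) - θ * y) := by
        rw [← Real.exp_add]
        ring_nf

lemma tail_low (q : U → ℝ) (hq0 : ∀ u, 0 ≤ q u) (hq1 : ∑ u, q u = 1)
    (h : U → Fin n) (p : Fin n → ℝ)
    (hp : ∀ i, p i = ∑ u ∈ Finset.univ.filter (fun u => h u = i), q u)
    (hC0 : 0 ≤ ∑ i, p i ^ 2) (hC1 : (∑ i, p i ^ 2) ≤ 1)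
    (hm : 2 ≤ m) (y θ : ℝ) (hθ : 0 ≤ θ) :
    ∑ x : Fin m → U, (if collEst h x < y then (∏ j, q (x j)) else 0)
      ≤ Real.exp (((m/2:ℕ):ℝ) * ((∑ i, p i ^ 2) * (Real.exp ((-θ)/((m/2:ℕ):ℝ)) - 1)) + θ * y) := by
  have hwnn : ∀ x : Fin m → U, 0 ≤ ∏ j, q (x j) :=
    fun x => Finset.prod_nonneg (fun j _ => hq0 _)
  have step1 : ∑ x : Fin m → U, (if collEst h x < y then (∏ j, q (x j)) else 0)
      ≤ ∑ x : Fin m → U, (∏ j, q (x j)) * Real.exp ((-θ) * collEst h x + θ * y) := by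
    refine Finset.sum_le_sum (fun x _ => ?_)
    by_cases hx : collEst h x < y
    · rw [if_pos hx]
      refine le_mul_of_one_le_right (hwnn x) (Real.one_le_exp ?_)
      nlinarith
    · rw [if_neg hx]
      exact mul_nonneg (hwnn x) (le_of_lt (Real.exp_pos _))
  refine le_trans step1 ?_
  have step2 : ∑ x : Fin m → U, (∏ j, q (x j)) * Real.exp ((-θ) * collEst h x + θ * y)
      = (∑ x : Fin m → U, (∏ j, q (x j)) * Real.exp ((-θ) * collEst h x)) * Real.exp (θ*y) := by
    rw [Finset.sum_mul]
    refine Finset.sum_congr rfl (fun x _ => ?_)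
    rw [mul_assoc, ← Real.exp_add]
  rw [step2]
  have hmgf := CEaux4.mgf_bound q hq0 hq1 h hm (-θ)
  rw [mgf_eval q hq1 h p hp] at hmgf
  have hpow := CEaux5.one_add_le_exp_pow hC0 hC1 (m/2) (y := (-θ)/((m/2:ℕ):ℝ))
  have hchain := le_trans hmgf hpow
  calc (∑ x : Fin m → U, (∏ j, q (x j)) * Real.exp ((-θ) * collEst h x)) * Real.exp (θ*y)
      ≤ Real.exp (((m/2:ℕ):ℝ) * ((∑ i, p i ^ 2) * (Real.exp ((-θ)/((m/2:ℕ):ℝ)) - 1)))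
          * Real.exp (θ*y) :=
        mul_le_mul_of_nonneg_right hchain (le_of_lt (Real.exp_pos _))
    _ = _ := by rw [← Real.exp_add]

end CEaux6


/-- Theorem 4 of the paper: For all `n > 24`, `0 < ε < 1/3`, `δ > 0`,
`s > 0`, if `m = ε⁻² n^(1+δ)`, then with probability at least `1 − (10/9) e^(−s²/4)`
the empirical collision probability estimates `‖p‖² = ∑ i, p i ^ 2` within relative
error `ε (3 + 6s/n^(δ/2) + 5s²ε/n^δ)`. -/
theorem collision_estimator_gaussian_tail
    {U : Type*} [Fintype U] [Nonempty U]
    (n : ℕ) (hn : 24 < n)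
    (q : U → ℝ) (hq0 : ∀ u, 0 ≤ q u) (hq1 : ∑ u, q u = 1)
    (h : U → Fin n)
    (p : Fin n → ℝ)
    (hp : ∀ i, p i = ∑ u ∈ Finset.univ.filter (fun u => h u = i), q u)
    (m : ℕ) (hm : 2 ≤ m)
    (ε δ s : ℝ) (hε0 : 0 < ε) (hε : ε < 1 / 3) (hδ : 0 < δ) (hs : 0 < s)
    (hmn : (m : ℝ) = ε ^ (-2 : ℝ) * (n : ℝ) ^ (1 + δ)) :
    1 - (10 / 9) * Real.exp (-s ^ 2 / 4)
      ≤ Pr q {x : Fin m → U |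
          |collEst h x * (1 / ∑ i : Fin n, p i ^ 2) - 1|
            ≤ ε * (3 + 6 * s / (n : ℝ) ^ (δ / 2) + 5 * s ^ 2 * ε / (n : ℝ) ^ δ)} := by
  classical
  have hwnn : ∀ x : Fin m → U, 0 ≤ ∏ j, q (x j) :=
    fun x => Finset.prod_nonneg (fun j _ => hq0 _)
  obtain ⟨C, hCdef⟩ : ∃ C, C = ∑ i : Fin n, p i ^ 2 := ⟨_, rfl⟩
  rw [← hCdef]
  have hp0 : ∀ i, 0 ≤ p i := fun i => by
    rw [hp i]; exact Finset.sum_nonneg fun u _ => hq0 u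
  have hpsum : ∑ i, p i = 1 := by
    rw [Finset.sum_congr rfl (fun i _ => hp i),
      Finset.sum_fiberwise Finset.univ (fun u => h u) q]
    exact hq1
  have hC0 : 0 ≤ C := hCdef ▸ Finset.sum_nonneg fun i _ => sq_nonneg _
  have hC1 : C ≤ 1 := by
    have h1 := Finset.sum_sq_le_sq_sum_of_nonneg (s := Finset.univ) (f := p)
      (fun i _ => hp0 i)
    rw [hpsum] at h1
    rw [hCdef]
    simpa using h1
  have hn25 : (25:ℝ) ≤ (n:ℝ) := by
    have : (25:ℕ) ≤ n := hn
    exact_mod_cast this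
  have hnpos : (0:ℝ) < n := by linarith only [hn25]
  have hnC : 1 ≤ (n:ℝ) * C := by
    have hcs := Finset.sum_mul_sq_le_sq_mul_sq Finset.univ (fun _ : Fin n => (1:ℝ)) p
    have h1 : (∑ i, (1:ℝ) * p i) = 1 := by
      simp only [one_mul]; exact hpsum
    have h2 : (∑ _i : Fin n, (1:ℝ)^2) = (n:ℝ) := by simp
    calc (1:ℝ) = (∑ i, (1:ℝ) * p i)^2 := by rw [h1]; norm_num
      _ ≤ (∑ _i : Fin n, (1:ℝ)^2) * ∑ i, p i^2 := hcs
      _ = (n:ℝ) * C := by rw [h2, hCdef]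
  have hCpos : 0 < C := by
    by_contra hc
    push_neg at hc
    have hle : (n:ℝ)*C ≤ 0 := mul_nonpos_of_nonneg_of_nonpos (le_of_lt hnpos) hc
    linarith only [hnC, hle]
  obtain ⟨ν, hνdef⟩ : ∃ v, v = (n:ℝ) ^ (δ/2) := ⟨_, rfl⟩
  rw [← hνdef]
  have hν1 : 1 ≤ ν := hνdef ▸ Real.one_le_rpow (by linarith) (by linarith)
  have hνpos : (0:ℝ) < ν := lt_of_lt_of_le one_pos hν1
  have hν2 : ν^2 = (n:ℝ)^δ := by
    rw [hνdef, ← Real.rpow_natCast ((n:ℝ)^(δ/2)) 2, ← Real.rpow_mul (le_of_lt hnpos)]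
    norm_num
  have hmε : (m:ℝ) * ε^2 = (n:ℝ) * ν^2 := by
    have hrw : ε ^ (-2:ℝ) = (ε^2)⁻¹ := by
      rw [show (-2:ℝ) = -(2:ℝ) by norm_num, Real.rpow_neg (le_of_lt hε0)]
      congr 1
      rw [show (2:ℝ) = ((2:ℕ):ℝ) by norm_num, Real.rpow_natCast]
    rw [hmn, hrw, hν2, Real.rpow_add hnpos 1 δ, Real.rpow_one]
    have hε2 : ε^2 ≠ 0 := by positivity
    field_simp
  have hm225 : (225:ℝ) < (m:ℝ) := by
    have hν1sq : (1:ℝ) ≤ ν^2 := by nlinarith only [hν1]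
    have h1 : (25:ℝ) ≤ (n:ℝ) * ν^2 := by nlinarith only [hν1sq, hn25]
    have hε2 : ε^2 < 1/9 := by nlinarith only [hε, hε0]
    have hε2pos : (0:ℝ) < ε^2 := by positivity
    have h2 : (25:ℝ) ≤ (m:ℝ)*ε^2 := by rw [hmε]; exact h1
    have h3 : (225:ℝ)*ε^2 < 25 := by linarith only [hε2]
    nlinarith only [h2, h3, hε2pos]
  have hm226 : 226 ≤ m := by
    by_contra hcon
    push_neg at hcon
    have h1 : m ≤ 225 := by omega
    have h2 : (m:ℝ) ≤ 225 := by exact_mod_cast h1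
    linarith only [h2, hm225]
  obtain ⟨N, hNdef⟩ : ∃ N, N = m/2 := ⟨_, rfl⟩
  have hNge : (225/452 : ℝ) * (m:ℝ) ≤ (N:ℝ) := by
    have h452 : 225 * m ≤ 452 * N := by omega
    have hc : ((225 * m : ℕ):ℝ) ≤ ((452 * N : ℕ):ℝ) := by exact_mod_cast h452
    push_cast at hc
    linarith only [hc]
  have hNpos : 0 < N := by omega
  have hNR : (0:ℝ) < (N:ℝ) := by exact_mod_cast hNpos
  obtain ⟨K, hKdef⟩ : ∃ K, K = (N:ℝ) * C := ⟨_, rfl⟩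
  have hKpos : 0 < K := by rw [hKdef]; exact mul_pos hNR hCpos
  obtain ⟨g, hgdef⟩ : ∃ g, g = ε / ν := ⟨_, rfl⟩
  have hg0 : 0 < g := hgdef ▸ div_pos hε0 hνpos
  have hg13 : g ≤ 1/3 := by
    have : g ≤ ε := hgdef ▸ div_le_self (le_of_lt hε0) hν1
    linarith only [this, hε]
  have hKg2 : (225/452:ℝ) ≤ K * g^2 := by
    have he1 : K * g^2 = (N:ℝ) * (C * ε^2 / ν^2) := by
      rw [hKdef, hgdef, div_pow]
      field_simp
    have he2 : (m:ℝ) * (C * ε^2 / ν^2) = (n:ℝ) * C := by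
      have hν2ne : ν^2 ≠ 0 := by positivity
      rw [show (m:ℝ) * (C * ε^2/ν^2) = C * ((m:ℝ)*ε^2) / ν^2 from by ring, hmε]
      field_simp
    have he3 : (0:ℝ) ≤ C * ε^2 / ν^2 := by positivity
    have hstep := mul_le_mul_of_nonneg_left hnC (by norm_num : (0:ℝ) ≤ 225/452)
    calc (225/452:ℝ) ≤ (225/452:ℝ) * ((n:ℝ) * C) := by linarith
      _ = (225/452:ℝ) * ((m:ℝ) * (C * ε^2 / ν^2)) := by rw [he2]
      _ = ((225/452:ℝ) * (m:ℝ)) * (C * ε^2 / ν^2) := by ring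
      _ ≤ (N:ℝ) * (C * ε^2 / ν^2) := mul_le_mul_of_nonneg_right hNge he3
      _ = K * g^2 := he1.symm
  obtain ⟨η, hηdef⟩ : ∃ e, e = ε * (3 + 6 * s / ν + 5 * s ^ 2 * ε / (n:ℝ)^δ) := ⟨_, rfl⟩
  rw [← hηdef]
  have hηeq : η = 3*ε + 6*s*g + 5*s^2*g^2 := by
    rw [hηdef, hgdef, ← hν2]
    have hνne : ν ≠ 0 := ne_of_gt hνpos
    field_simp
  have hη_lb : 3*g + 6*s*g + 5*s^2*g^2 ≤ η := by
    rw [hηeq]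
    have : g ≤ ε := hgdef ▸ div_le_self (le_of_lt hε0) hν1
    linarith only [this]
  have hη0 : 0 < η := by
    rw [hηeq]
    have h1 : 0 < 6*s*g := by positivity
    have h2 : (0:ℝ) ≤ 5*s^2*g^2 := by positivity
    linarith only [h1, h2, hε0]
  -- probability rewriting
  have hPr : Pr q {x : Fin m → U | |collEst h x * (1/C) - 1| ≤ η}
      = ∑ x : Fin m → U, (if |collEst h x * (1/C) - 1| ≤ η then (∏ j, q (x j)) else 0) := by
    unfold Pr
    refine Finset.sum_congr rfl fun x _ => ?_
    by_cases hx : |collEst h x * (1/C) - 1| ≤ η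
    · have hmem : x ∈ {x : Fin m → U | |collEst h x * (1/C) - 1| ≤ η} := hx
      rw [Set.indicator_of_mem hmem, if_pos hx]
    · have hmem : x ∉ {x : Fin m → U | |collEst h x * (1/C) - 1| ≤ η} := hx
      rw [Set.indicator_of_notMem hmem, if_neg hx]
  rw [hPr]
  -- pointwise splitting
  have hsplit : ∀ x : Fin m → U,
      (∏ j, q (x j)) - (if C*(1+η) < collEst h x then (∏ j, q (x j)) else 0)
        - (if collEst h x < C*(1-η) then (∏ j, q (x j)) else 0)
      ≤ (if |collEst h x * (1/C) - 1| ≤ η then (∏ j, q (x j)) else 0) := by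
    intro x
    have ha : 0 ≤ (if C*(1+η) < collEst h x then (∏ j, q (x j)) else 0) := by
      split_ifs
      · exact hwnn x
      · exact le_refl 0
    have hb : 0 ≤ (if collEst h x < C*(1-η) then (∏ j, q (x j)) else 0) := by
      split_ifs
      · exact hwnn x
      · exact le_refl 0
    by_cases hx : |collEst h x * (1/C) - 1| ≤ η
    · rw [if_pos hx]
      linarith only [ha, hb]
    · rw [if_neg hx]
      have habs : η < |collEst h x * (1/C) - 1| := not_le.mp hx
      have hCne : C ≠ 0 := ne_of_gt hCpos
      rcases lt_abs.mp habs with hgt | hlt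
      · have hZ : C*(1+η) < collEst h x := by
          have h1 : (1+η) < collEst h x * (1/C) := by linarith only [hgt]
          calc C*(1+η) < C * (collEst h x * (1/C)) :=
                mul_lt_mul_of_pos_left h1 hCpos
            _ = collEst h x := by field_simp
        rw [if_pos hZ]
        linarith only [hb, hwnn x]
      · have hZ : collEst h x < C*(1-η) := by
          have h1 : collEst h x * (1/C) < 1 - η := by linarith only [hlt]
          calc collEst h x = C * (collEst h x * (1/C)) := by field_simp
            _ < C * (1-η) := mul_lt_mul_of_pos_left h1 hCpos
        rw [if_pos hZ]
        linarith only [ha, hwnn x]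
  have hsum_w : ∑ x : Fin m → U, (∏ j, q (x j)) = 1 := by
    rw [CEaux.sum_w q, hq1, one_pow]
  -- upper tail bound
  have he2exp : (2:ℝ) ≤ Real.exp 1 := by
    have := Real.add_one_le_exp 1; linarith only [this]
  have hinv : (Real.exp 1)⁻¹ ≤ 5/9 := by
    have hmul : (Real.exp 1)⁻¹ * Real.exp 1 = 1 :=
      inv_mul_cancel₀ (ne_of_gt (Real.exp_pos 1))
    nlinarith only [hmul, he2exp, inv_nonneg.mpr (le_of_lt (Real.exp_pos 1))]
  have hup : ∑ x : Fin m → U, (if C*(1+η) < collEst h x then (∏ j, q (x j)) else 0)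
      ≤ (5/9) * Real.exp (-s^2/4) := by
    have hC0' : 0 ≤ ∑ i, p i ^ 2 := hCdef ▸ hC0
    have hC1' : (∑ i, p i ^ 2) ≤ 1 := hCdef ▸ hC1
    obtain ⟨t, ht0, ht1, hineq⟩ := CEaux5.numeric_up hg0 hg13 hs hKg2 hKpos hη_lb
    have hθ0 : (0:ℝ) ≤ (N:ℝ) * t := mul_nonneg (le_of_lt hNR) ht0
    have htail := CEaux6.tail_up q hq0 hq1 h p hp hC0' hC1' hm (C*(1+η)) ((N:ℝ)*t) hθ0
    rw [← hCdef] at htail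
    have hdiv : ((N:ℝ)*t)/((N:ℝ)) = t := mul_div_cancel_left₀ t (ne_of_gt hNR)
    rw [← hNdef] at htail
    rw [hdiv] at htail
    refine le_trans htail ?_
    have hexp_le : (N:ℝ)*(C*(Real.exp t - 1)) - ((N:ℝ)*t)*(C*(1+η)) ≤ -1 + (-s^2/4) := by
      have e1 : (N:ℝ)*(C*(Real.exp t - 1)) = K * (Real.exp t - 1) := by rw [hKdef]; ring
      have e2 : ((N:ℝ)*t)*(C*(1+η)) = K * (t*(1+η)) := by rw [hKdef]; ring
      rw [e1, e2]
      linarith only [hineq]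
    calc Real.exp ((N:ℝ)*(C*(Real.exp t - 1)) - ((N:ℝ)*t)*(C*(1+η)))
        ≤ Real.exp (-1 + (-s^2/4)) := Real.exp_le_exp.mpr hexp_le
      _ = Real.exp (-1) * Real.exp (-s^2/4) := Real.exp_add _ _
      _ ≤ (5/9) * Real.exp (-s^2/4) := by
          apply mul_le_mul_of_nonneg_right _ (le_of_lt (Real.exp_pos _))
          rw [Real.exp_neg]
          exact hinv
  -- lower tail bound
  have hlow : ∑ x : Fin m → U, (if collEst h x < C*(1-η) then (∏ j, q (x j)) else 0)
      ≤ (5/9) * Real.exp (-s^2/4) := by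
    rcases le_or_gt η 1 with hη1 | hη1
    · have hnum := CEaux5.numeric_low hg0 hg13 hs hKg2 hKpos hη_lb hη1
      have hC0' : 0 ≤ ∑ i, p i ^ 2 := hCdef ▸ hC0
      have hC1' : (∑ i, p i ^ 2) ≤ 1 := hCdef ▸ hC1
      have hθ0 : (0:ℝ) ≤ (N:ℝ) * η := mul_nonneg (le_of_lt hNR) (le_of_lt hη0)
      have htail := CEaux6.tail_low q hq0 hq1 h p hp hC0' hC1' hm (C*(1-η)) ((N:ℝ)*η) hθ0
      rw [← hCdef] at htail
      have hdiv : (-((N:ℝ)*η))/((N:ℝ)) = -η := by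
        rw [neg_div, mul_div_cancel_left₀ η (ne_of_gt hNR)]
      rw [← hNdef] at htail
      rw [hdiv] at htail
      refine le_trans htail ?_
      have hquad : Real.exp (-η) ≤ 1 + (-η) + (3/4)*(-η)^2 :=
        CEaux5.exp_quad (by rw [abs_neg, abs_of_nonneg (le_of_lt hη0)]; exact hη1)
      have hexp_le : (N:ℝ)*(C*(Real.exp (-η) - 1)) + ((N:ℝ)*η)*(C*(1-η)) ≤ -1 + (-s^2/4) := by
        have e1 : (N:ℝ)*(C*(Real.exp (-η) - 1)) = K * (Real.exp (-η) - 1) := by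
          rw [hKdef]; ring
        have e2 : ((N:ℝ)*η)*(C*(1-η)) = K * (η*(1-η)) := by rw [hKdef]; ring
        rw [e1, e2]
        have hcomb : K * (Real.exp (-η) - 1) + K * (η*(1-η)) ≤ -(K * (η^2/4)) := by
          have hsum2 : (Real.exp (-η) - 1) + (η*(1-η)) ≤ -(η^2/4) := by
            nlinarith only [hquad]
          nlinarith only [hsum2, hKpos]
        linarith only [hcomb, hnum]
      calc Real.exp ((N:ℝ)*(C*(Real.exp (-η) - 1)) + ((N:ℝ)*η)*(C*(1-η)))
          ≤ Real.exp (-1 + (-s^2/4)) := Real.exp_le_exp.mpr hexp_le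
        _ = Real.exp (-1) * Real.exp (-s^2/4) := Real.exp_add _ _
        _ ≤ (5/9) * Real.exp (-s^2/4) := by
            apply mul_le_mul_of_nonneg_right _ (le_of_lt (Real.exp_pos _))
            rw [Real.exp_neg]
            exact hinv
    · have hzero : ∀ x : Fin m → U,
          (if collEst h x < C*(1-η) then (∏ j, q (x j)) else 0) = 0 := by
        intro x
        refine if_neg (not_lt.mpr ?_)
        have h1 : C*(1-η) < 0 := mul_neg_of_pos_of_neg hCpos (by linarith)
        have h2 : 0 ≤ collEst h x := CEaux.collEst_nonneg h x hm
        linarith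
      rw [Finset.sum_congr rfl (fun x _ => hzero x), Finset.sum_const_zero]
      positivity
  -- combine
  have hmain := Finset.sum_le_sum (fun x (_ : x ∈ Finset.univ) => hsplit x)
  rw [Finset.sum_sub_distrib, Finset.sum_sub_distrib, hsum_w] at hmain
  have hfinal : 1 - (10/9) * Real.exp (-s^2/4)
      ≤ 1 - (∑ x : Fin m → U, (if C*(1+η) < collEst h x then (∏ j, q (x j)) else 0))
          - (∑ x : Fin m → U, (if collEst h x < C*(1-η) then (∏ j, q (x j)) else 0)) := by
    linarith only [hup, hlow]
  linarith only [hmain, hfinal]
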